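/- Suppose there exist constants c, C > 0 with θ_n(p_c) ≤ C/n² for all n ≥ 1, and suppose Theorem 1 holds: θ_{2n}(p - 2θ_m(p)) ≤ C₀·θ_n(p)/2^{n/m} for all p ∈ [0,1], m,n ≥ 1, with θ monotone in each variable. Then there exist constants c', C', ε₀ > 0 such that for every ε ∈ (0, ε₀) and n ≥ 1, θ_n(p_c - ε) ≤ (C'/n²)·exp(-c'·√ε·n). -/

import Mathlib

set_option maxHeartbeats 1000000


theorem near_critical_sharpness_upper (θ : ℝ → ℕ → ℝ) (p_c C C₀ : ℝ)
    (hpc : p_c ∈ Set.Ioo (0 : ℝ) 1) (hC : 0 < C) (hC₀ : 0 < C₀)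
    (hrange : ∀ p ∈ Set.Icc (0 : ℝ) 1, ∀ n, θ p n ∈ Set.Icc (0 : ℝ) 1)
    (hneg : ∀ q < (0 : ℝ), ∀ n, θ q n = 0)
    (hmono : ∀ n, Monotone (fun p => θ p n))
    (hanti : ∀ p, Antitone (θ p))
    (hcrit : ∀ n : ℕ, 1 ≤ n → θ p_c n ≤ C / n ^ 2)
    (hkey : ∀ p ∈ Set.Icc (0 : ℝ) 1, ∀ m n : ℕ, 1 ≤ m → 1 ≤ n →
      θ (p - 2 * θ p m) (2 * n) ≤ C₀ * θ p n / 2 ^ ((n : ℝ) / m)) :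
    ∃ c' > (0 : ℝ), ∃ C' > (0 : ℝ), ∃ ε₀ > (0 : ℝ), ∀ ε ∈ Set.Ioo (0 : ℝ) ε₀, ∀ n : ℕ, 1 ≤ n →
      θ (p_c - ε) n ≤ C' / n ^ 2 * Real.exp (-c' * Real.sqrt ε * n) := by
  have hpc01 : p_c ∈ Set.Icc (0 : ℝ) 1 := ⟨hpc.1.le, hpc.2.le⟩
  have hsq2C : (0:ℝ) < Real.sqrt (2*C) := Real.sqrt_pos.2 (by linarith)
  have hlog2 : (0:ℝ) < Real.log 2 := Real.log_pos one_lt_two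
  set c' : ℝ := Real.log 2 / (6 * Real.sqrt (2*C)) with hc'
  have hc'pos : 0 < c' := div_pos hlog2 (by positivity)
  refine ⟨c', hc'pos, 9*C₀*C + 2, by positivity, 2*C, by linarith, ?_⟩
  rintro ε ⟨hε0, hε2C⟩ N hN
  have hsε : (0:ℝ) < Real.sqrt ε := Real.sqrt_pos.2 hε0
  -- upper bound θ (p_c - ε) k ≤ 1
  have hub : ∀ k, θ (p_c - ε) k ≤ 1 := fun k =>
    le_trans (hmono k (by linarith : p_c - ε ≤ p_c)) (hrange p_c hpc01 k).2
  -- exp(-c'√ε N) ≥ 1/2 bound ingredients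
  have hsεle : Real.sqrt ε ≤ Real.sqrt (2*C) := Real.sqrt_le_sqrt hε2C.le
  have hc'ε : c' * Real.sqrt ε ≤ Real.log 2 / 6 := by
    rw [hc']
    rw [div_mul_eq_mul_div, div_le_div_iff₀ (by positivity) (by norm_num)]
    calc Real.log 2 * Real.sqrt ε * 6 ≤ Real.log 2 * Real.sqrt (2*C) * 6 := by
          nlinarith
      _ = Real.log 2 * (6 * Real.sqrt (2*C)) := by ring
  -- case N = 1 handled together: first prove for N ≥ 2, then N = 1.
  rcases eq_or_lt_of_le hN with h1 | h2
  · -- N = 1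
    have hN1 : N = 1 := h1.symm
    subst hN1
    have hexp : Real.exp (-(1:ℝ)/6 * 1) ≤ Real.exp (-c' * Real.sqrt ε * 1) := by
      apply Real.exp_le_exp.2
      have hlog2lt : Real.log 2 < 1 := by
        have := Real.log_lt_sub_one_of_pos (by norm_num : (0:ℝ) < 2) (by norm_num)
        linarith
      nlinarith [hc'ε]
    have h12 : (1:ℝ)/2 ≤ Real.exp (-(1:ℝ)/6 * 1) := by
      have := Real.add_one_le_exp (-(1:ℝ)/6 * 1)
      linarith
    simp only [Nat.cast_one, one_pow, div_one]
    calc θ (p_c - ε) 1 ≤ 1 := hub 1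
      _ ≤ (9*C₀*C + 2) * Real.exp (-c' * Real.sqrt ε * 1) := by
          have hCpos : (0:ℝ) < 9*C₀*C + 2 := by positivity
          nlinarith [Real.exp_pos (-c' * Real.sqrt ε * 1)]
  · -- N ≥ 2
    have hN2 : 2 ≤ N := h2
    set m : ℕ := ⌈Real.sqrt (2*C/ε)⌉₊ with hm
    have h2Cε1 : 1 < 2*C/ε := (one_lt_div hε0).2 hε2C
    have hsqpos : 0 < Real.sqrt (2*C/ε) := Real.sqrt_pos.2 (by linarith)
    have hmR : Real.sqrt (2*C/ε) ≤ (m:ℝ) := Nat.le_ceil _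
    have hm1 : 1 ≤ m := Nat.one_le_cast.1 (le_trans (by
      nlinarith [Real.sq_sqrt (le_of_lt (lt_trans one_pos h2Cε1)),
        Real.sqrt_nonneg (2*C/ε)]) hmR)
    have hmpos : (0:ℝ) < (m:ℝ) := lt_of_lt_of_le hsqpos hmR
    -- m² ≥ 2C/ε, hence 2θ_m(p_c) ≤ ε
    have hm2 : 2*C/ε ≤ (m:ℝ)^2 := by
      have := Real.sq_sqrt (le_of_lt (lt_trans one_pos h2Cε1))
      nlinarith [Real.sqrt_nonneg (2*C/ε)]
    have hθm : θ p_c m ≤ C / (m:ℝ)^2 := hcrit m hm1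
    have h2θm : 2 * θ p_c m ≤ ε := by
      have h1 : 2*C ≤ (m:ℝ)^2 * ε := (div_le_iff₀ hε0).1 hm2
      have h2 : C / (m:ℝ)^2 ≤ ε/2 := by
        rw [div_le_div_iff₀ (by positivity) two_pos]; nlinarith
      linarith
    have hle : p_c - ε ≤ p_c - 2 * θ p_c m := by linarith
    -- m upper bound
    have hsqrtdiv : Real.sqrt (2*C/ε) = Real.sqrt (2*C) / Real.sqrt ε := by
      rw [Real.sqrt_div (by linarith)]
    have h1lt : 1 ≤ Real.sqrt (2*C/ε) := by nlinarith [Real.sq_sqrt (le_of_lt (lt_trans one_pos h2Cε1)), Real.sqrt_nonneg (2*C/ε)]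
    have hmub : (m:ℝ) ≤ 2 * Real.sqrt (2*C) / Real.sqrt ε := by
      have hceil : (m:ℝ) < Real.sqrt (2*C/ε) + 1 := Nat.ceil_lt_add_one hsqpos.le
      have : (m:ℝ) ≤ 2 * Real.sqrt (2*C/ε) := by linarith
      rw [hsqrtdiv] at this
      calc (m:ℝ) ≤ 2 * (Real.sqrt (2*C)/Real.sqrt ε) := this
        _ = 2 * Real.sqrt (2*C) / Real.sqrt ε := by ring
    -- n = N/2
    set n : ℕ := N / 2 with hn
    have hn1 : 1 ≤ n := by omega
    have h2n : 2 * n ≤ N := by omega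
    have h3n : N ≤ 3 * n := by omega
    have h3nR : (N:ℝ) ≤ 3 * (n:ℝ) := by exact_mod_cast h3n
    have hnpos : (0:ℝ) < (n:ℝ) := by exact_mod_cast hn1
    have hNpos : (0:ℝ) < (N:ℝ) := by positivity
    -- chain
    have step1 : θ (p_c - ε) N ≤ θ (p_c - ε) (2*n) := hanti _ h2n
    have step2 : θ (p_c - ε) (2*n) ≤ θ (p_c - 2 * θ p_c m) (2*n) := hmono (2*n) hle
    have step3 := hkey p_c hpc01 m n hm1 hn1
    -- bound the RHS
    have hθn : θ p_c n ≤ C / (n:ℝ)^2 := hcrit n hn1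
    have hθn0 : 0 ≤ θ p_c n := (hrange p_c hpc01 n).1
    -- 2^(n/m) ≥ exp(c'√ε N)
    have hxlb : c' * Real.sqrt ε * N ≤ Real.log 2 * ((n:ℝ)/(m:ℝ)) := by
      have hB : 0 < 2 * Real.sqrt (2*C) / Real.sqrt ε := by positivity
      have hdiv : (N:ℝ)/3 / (2 * Real.sqrt (2*C) / Real.sqrt ε) ≤ (n:ℝ)/(m:ℝ) :=
        div_le_div₀ hnpos.le (by linarith) hmpos hmub
      have heq : (N:ℝ)/3 / (2 * Real.sqrt (2*C) / Real.sqrt ε)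
          = (N:ℝ) * Real.sqrt ε / (6 * Real.sqrt (2*C)) := by
        field_simp; ring
      rw [heq] at hdiv
      have : Real.log 2 * ((N:ℝ) * Real.sqrt ε / (6 * Real.sqrt (2*C)))
          ≤ Real.log 2 * ((n:ℝ)/(m:ℝ)) := by
        exact mul_le_mul_of_nonneg_left hdiv hlog2.le
      calc c' * Real.sqrt ε * N
          = Real.log 2 * ((N:ℝ) * Real.sqrt ε / (6 * Real.sqrt (2*C))) := by
            rw [hc']; field_simp
        _ ≤ _ := this
    have hpow : (2:ℝ) ^ ((n:ℝ)/(m:ℝ)) = Real.exp (Real.log 2 * ((n:ℝ)/(m:ℝ))) := by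
      rw [Real.rpow_def_of_pos (by norm_num)]
    have hinv : ((2:ℝ) ^ ((n:ℝ)/(m:ℝ)))⁻¹ ≤ Real.exp (-(c' * Real.sqrt ε * N)) := by
      rw [hpow, ← Real.exp_neg]
      exact Real.exp_le_exp.2 (by linarith)
    have hfinal : C₀ * θ p_c n / 2 ^ ((n:ℝ)/(m:ℝ))
        ≤ (9*C₀*C + 2) / (N:ℝ)^2 * Real.exp (-c' * Real.sqrt ε * N) := by
      have hnum : C₀ * θ p_c n ≤ (9*C₀*C) / (N:ℝ)^2 := by
        have h1 : C₀ * θ p_c n ≤ C₀ * (C / (n:ℝ)^2) :=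
          mul_le_mul_of_nonneg_left hθn hC₀.le
        have h2 : (N:ℝ)^2 ≤ 9 * (n:ℝ)^2 := by nlinarith [mul_self_le_mul_self hNpos.le h3nR]
        have h3 : C₀ * (C / (n:ℝ)^2) ≤ 9*C₀*C / (N:ℝ)^2 := by
          rw [mul_div_assoc', div_le_div_iff₀ (by positivity) (by positivity)]
          nlinarith [mul_le_mul_of_nonneg_left h2 (by positivity : (0:ℝ) ≤ C₀*C)]
        linarith
      have hpowpos : (0:ℝ) < (2:ℝ) ^ ((n:ℝ)/(m:ℝ)) := by
        rw [hpow]; exact Real.exp_pos _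
      have hexpeq : Real.exp (-(c' * Real.sqrt ε * N)) = Real.exp (-c' * Real.sqrt ε * N) := by
        ring_nf
      calc C₀ * θ p_c n / 2 ^ ((n:ℝ)/(m:ℝ))
          = (C₀ * θ p_c n) * ((2:ℝ) ^ ((n:ℝ)/(m:ℝ)))⁻¹ := by rw [div_eq_mul_inv]
        _ ≤ ((9*C₀*C) / (N:ℝ)^2) * Real.exp (-(c' * Real.sqrt ε * N)) := by
            apply mul_le_mul hnum hinv (by positivity) (by positivity)
        _ ≤ (9*C₀*C + 2) / (N:ℝ)^2 * Real.exp (-c' * Real.sqrt ε * N) := by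
            rw [hexpeq]
            gcongr
            linarith
    calc θ (p_c - ε) N ≤ θ (p_c - 2 * θ p_c m) (2*n) := le_trans step1 step2
      _ ≤ C₀ * θ p_c n / 2 ^ ((n:ℝ)/(m:ℝ)) := step3
      _ ≤ (9*C₀*C + 2) / (N:ℝ)^2 * Real.exp (-c' * Real.sqrt ε * N) := hfinal
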